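/- Let 0 ≤ σ < 1, n ≥ 1, s ≥ 1 be given, and suppose a_k ≥ 0 satisfies a_k ≤ min(2, √n · σ^k) for all k ≥ 1. Then ∑_{k=1}^{s-1} a_k ≤ 2·log(s√n)/(1 - σ) + 1. -/

import Mathlib

theorem cumulative_mixing_bound (σ : ℝ) (hσ0 : 0 ≤ σ) (hσ1 : σ < 1)
    (n s : ℕ) (hn : 1 ≤ n) (hs : 1 ≤ s)
    (a : ℕ → ℝ) (ha0 : ∀ k, 1 ≤ k → 0 ≤ a k)
    (ha : ∀ k, 1 ≤ k → a k ≤ min 2 (Real.sqrt n * σ ^ k)) :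
    ∑ k ∈ Finset.Icc 1 (s - 1), a k ≤
      2 * Real.log (s * Real.sqrt n) / (1 - σ) + 1 := by
  have hn1 : (1:ℝ) ≤ Real.sqrt n := by
    rw [show (1:ℝ) = Real.sqrt 1 from Real.sqrt_one.symm]
    exact Real.sqrt_le_sqrt (by exact_mod_cast hn)
  have hs1 : (1:ℝ) ≤ (s:ℝ) := by exact_mod_cast hs
  have hsn : (1:ℝ) ≤ (s:ℝ) * Real.sqrt n := by nlinarith
  set L := Real.log ((s:ℝ) * Real.sqrt n) with hLdef
  have hL0 : 0 ≤ L := Real.log_nonneg hsn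
  have h1σ : 0 < 1 - σ := by linarith
  rcases eq_or_lt_of_le hσ0 with h0 | hσpos
  · -- σ = 0
    have hsum0 : ∑ k ∈ Finset.Icc 1 (s-1), a k ≤ 0 := by
      apply Finset.sum_nonpos
      intro k hk
      have hk1 : 1 ≤ k := (Finset.mem_Icc.mp hk).1
      have := ha k hk1
      rw [← h0, zero_pow (by omega : k ≠ 0), mul_zero] at this
      simpa using this.trans (min_le_right _ _)
    have : 0 ≤ 2 * L / (1 - σ) := by positivity
    linarith
  · have hσinv : 1 < σ⁻¹ := (one_lt_inv₀ hσpos).mpr hσ1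
    have hlogσ : 0 < Real.log σ⁻¹ := Real.log_pos hσinv
    have hkey : 1 - σ ≤ Real.log σ⁻¹ := by
      have := Real.log_le_sub_one_of_pos hσpos
      rw [Real.log_inv]; linarith
    set m := ⌊L / Real.log σ⁻¹⌋₊ with hmdef
    have hm1 : (m:ℝ) ≤ L / Real.log σ⁻¹ := Nat.floor_le (by positivity)
    have hm2 : L < ((m:ℝ) + 1) * Real.log σ⁻¹ := by
      have h := Nat.lt_floor_add_one (L / Real.log σ⁻¹)
      rw [div_lt_iff₀ hlogσ] at h
      exact_mod_cast h
    -- tail bound: σ^(m+1) ≤ exp (-L)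
    have hpow : σ ^ (m+1) ≤ Real.exp (-L) := by
      have : σ ^ (m+1) = Real.exp (((m:ℝ)+1) * Real.log σ) := by
        rw [← Real.rpow_natCast σ (m+1), Real.rpow_def_of_pos hσpos]
        push_cast
        ring_nf
      rw [this]
      apply Real.exp_le_exp.mpr
      have : Real.log σ = - Real.log σ⁻¹ := by rw [Real.log_inv]; ring
      rw [this]
      nlinarith
    have hsnpos : (0:ℝ) < (s:ℝ) * Real.sqrt n := by linarith
    have hexpL : Real.exp (-L) = ((s:ℝ) * Real.sqrt n)⁻¹ := by
      rw [Real.exp_neg, hLdef, Real.exp_log hsnpos]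
    have hspos : (0:ℝ) < s := by linarith
    have hsqpos : (0:ℝ) < Real.sqrt n := by linarith
    -- pointwise bound
    have hb : ∀ k ∈ Finset.Icc 1 (s-1), a k ≤ if k ≤ m then (2:ℝ) else 1/s := by
      intro k hk
      have hk1 : 1 ≤ k := (Finset.mem_Icc.mp hk).1
      by_cases hkm : k ≤ m
      · simp only [hkm, if_true]
        exact (ha k hk1).trans (min_le_left _ _)
      · simp only [hkm, if_false]
        have hmk : m + 1 ≤ k := by omega
        have h1 : σ ^ k ≤ σ ^ (m+1) :=
          pow_le_pow_of_le_one hσ0 (le_of_lt hσ1) hmk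
        have h2 : Real.sqrt n * σ ^ k ≤ Real.sqrt n * Real.exp (-L) := by
          have := h1.trans hpow
          nlinarith
        have h3 : Real.sqrt n * Real.exp (-L) = 1 / s := by
          rw [hexpL]
          field_simp
        exact (ha k hk1).trans ((min_le_right _ _).trans (h3 ▸ h2))
    calc ∑ k ∈ Finset.Icc 1 (s-1), a k
        ≤ ∑ k ∈ Finset.Icc 1 (s-1), (if k ≤ m then (2:ℝ) else 1/s) :=
          Finset.sum_le_sum hb
      _ = ∑ k ∈ (Finset.Icc 1 (s-1)).filter (· ≤ m), (2:ℝ)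
          + ∑ k ∈ (Finset.Icc 1 (s-1)).filter (fun k => ¬ k ≤ m), (1/s : ℝ) :=
          by rw [Finset.sum_ite]
      _ ≤ 2 * m + 1 := by
          rw [Finset.sum_const, Finset.sum_const]
          have hc1 : ((Finset.Icc 1 (s-1)).filter (· ≤ m)).card ≤ m := by
            have : (Finset.Icc 1 (s-1)).filter (· ≤ m) ⊆ Finset.Icc 1 m := by
              intro x hx
              simp only [Finset.mem_filter, Finset.mem_Icc] at hx ⊢
              omega
            calc _ ≤ (Finset.Icc 1 m).card := Finset.card_le_card this
              _ = m := by rw [Nat.card_Icc]; omega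
          have hc2 : ((Finset.Icc 1 (s-1)).filter (fun k => ¬ k ≤ m)).card ≤ s - 1 := by
            calc _ ≤ (Finset.Icc 1 (s-1)).card := Finset.card_filter_le _ _
              _ = s - 1 := by rw [Nat.card_Icc]; omega
          have hc1' : (((Finset.Icc 1 (s-1)).filter (· ≤ m)).card : ℝ) ≤ m := by
            exact_mod_cast hc1
          have hc2' : (((Finset.Icc 1 (s-1)).filter (fun k => ¬ k ≤ m)).card : ℝ) ≤ (s:ℝ) - 1 := by
            have : ((s - 1 : ℕ) : ℝ) = (s:ℝ) - 1 := by
              rw [Nat.cast_sub hs]; simp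
            rw [← this]; exact_mod_cast hc2
          simp only [nsmul_eq_mul]
          have h1s : (0:ℝ) ≤ 1/s := by positivity
          have : (((Finset.Icc 1 (s-1)).filter (fun k => ¬ k ≤ m)).card : ℝ) * (1/s) ≤ 1 := by
            calc _ ≤ ((s:ℝ) - 1) * (1/s) := by nlinarith
              _ ≤ 1 := by rw [mul_one_div, div_le_one hspos]; linarith
          nlinarith
      _ ≤ 2 * L / (1 - σ) + 1 := by
          have : (m:ℝ) ≤ L / (1 - σ) :=
            hm1.trans (div_le_div_of_nonneg_left hL0 h1σ hkey)
          rw [mul_div_assoc]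
          linarith
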